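/- Three wedges of angle strictly less than π/2 cannot cover the plane; more generally, if a finite collection of wedges covers ℝ², then the sum of their angles is at least 2π. In particular, at least four wedges of angle π/2 are needed to cover the plane. -/

import Mathlib

open Real Complex

/-- The wedge (directional-antenna coverage region) with apex `p`, orientation `θ`
and angle `α`. -/
def Wedge (p : ℂ) (θ α : ℝ) : Set ℂ :=
  {x | ∃ r : ℝ, 0 ≤ r ∧ ∃ t ∈ Set.Icc 0 α,
    x = p + (r : ℂ) * Complex.exp ((θ + t : ℝ) * Complex.I)}

open MeasureTheory Filter

noncomputable def sectorMap (θ : ℝ) (z : ℂ) : ℂ :=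
  (z.re : ℂ) * Complex.exp (((θ : ℂ) + z.im) * Complex.I)

noncomputable def sectorDeriv (θ : ℝ) (z : ℂ) : ℂ →L[ℝ] ℂ :=
  (z.re : ℂ) • (Complex.exp (((θ : ℂ) + z.im) * Complex.I) •
      (Complex.I • (Complex.ofRealCLM.comp Complex.imCLM))) +
    Complex.exp (((θ : ℂ) + z.im) * Complex.I) • (Complex.ofRealCLM.comp Complex.reCLM)

lemma sectorMap_hasFDerivAt (θ : ℝ) (z : ℂ) :
    HasFDerivAt (sectorMap θ) (sectorDeriv θ z) z := by
  have h1 : HasFDerivAt (fun z : ℂ => (z.re : ℂ))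
      (Complex.ofRealCLM.comp Complex.reCLM) z :=
    (Complex.ofRealCLM.comp Complex.reCLM).hasFDerivAt
  have h2 : HasFDerivAt (fun z : ℂ => ((θ : ℂ) + z.im) * Complex.I)
      (Complex.I • (Complex.ofRealCLM.comp Complex.imCLM)) z := by
    have h := (((Complex.ofRealCLM.comp Complex.imCLM).hasFDerivAt (x := z)).const_add
      ((θ : ℂ))).mul_const Complex.I
    simpa using h
  have h3 := h2.cexp
  have := h1.mul h3
  exact this

lemma sectorDeriv_det (θ : ℝ) (z : ℂ) : (sectorDeriv θ z).det = z.re := by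
  have : (sectorDeriv θ z).det = LinearMap.det ((sectorDeriv θ z) : ℂ →ₗ[ℝ] ℂ) := rfl
  rw [this, ← LinearMap.det_toMatrix Complex.basisOneI, Matrix.det_fin_two]
  have hφ : ((θ : ℂ) + z.im) * Complex.I = ((θ + z.im : ℝ) : ℂ) * Complex.I := by push_cast; ring
  simp [LinearMap.toMatrix_apply, Complex.coe_basisOneI, Complex.coe_basisOneI_repr,
    sectorDeriv, hφ, Complex.exp_ofReal_mul_I_re, Complex.smul_re, Complex.smul_im]
  have := Real.sin_sq_add_cos_sq (θ + z.im)
  linear_combination z.re * this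

lemma lintegral_re_rect (ρ α : ℝ) (hρ : 0 ≤ ρ) :
    ∫⁻ q in Set.Icc 0 ρ ×ˢ Set.Icc 0 α, ENNReal.ofReal q.1 = ENNReal.ofReal (α * ρ ^ 2 / 2) := by
  rw [MeasureTheory.Measure.volume_eq_prod, ← Measure.prod_restrict, lintegral_prod _ (by fun_prop)]
  simp only [lintegral_const, Measure.restrict_apply MeasurableSet.univ, Set.univ_inter,
    Real.volume_Icc, sub_zero]
  rw [lintegral_mul_const _ (by fun_prop)]
  have h1 : ∫⁻ x in Set.Icc 0 ρ, ENNReal.ofReal x = ENNReal.ofReal (ρ ^ 2 / 2) := by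
    rw [← MeasureTheory.ofReal_integral_eq_lintegral_ofReal]
    · rw [show ∫ x in Set.Icc (0:ℝ) ρ, x = ρ ^ 2 / 2 by
        rw [MeasureTheory.integral_Icc_eq_integral_Ioc, ← intervalIntegral.integral_of_le hρ]
        simp [integral_id]]
    · exact (continuous_id.integrableOn_Icc)
    · exact MeasureTheory.ae_restrict_of_forall_mem measurableSet_Icc (fun x hx => hx.1)
  rw [h1, ← ENNReal.ofReal_mul (by positivity)]
  ring_nf

lemma sector_volume_le (θ α ρ : ℝ) (hα : 0 ≤ α) (hρ : 0 ≤ ρ) :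
    volume {x : ℂ | ∃ r : ℝ, 0 ≤ r ∧ r ≤ ρ ∧ ∃ t ∈ Set.Icc 0 α,
      x = (r : ℂ) * Complex.exp ((θ + t : ℝ) * Complex.I)} ≤
    ENNReal.ofReal (α * ρ ^ 2 / 2) := by
  set S : Set ℂ := Complex.measurableEquivRealProd ⁻¹' (Set.Icc 0 ρ ×ˢ Set.Icc 0 α) with hS
  have hSm : MeasurableSet S :=
    (measurableSet_Icc.prod measurableSet_Icc).preimage
      Complex.measurableEquivRealProd.measurable
  have hsub : {x : ℂ | ∃ r : ℝ, 0 ≤ r ∧ r ≤ ρ ∧ ∃ t ∈ Set.Icc 0 α,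
      x = (r : ℂ) * Complex.exp ((θ + t : ℝ) * Complex.I)} ⊆ sectorMap θ '' S := by
    rintro x ⟨r, hr0, hrρ, t, ht, rfl⟩
    refine ⟨⟨r, t⟩, ?_, ?_⟩
    · exact Set.mem_preimage.2 (Set.mk_mem_prod ⟨hr0, hrρ⟩ ⟨ht.1, ht.2⟩)
    · simp only [sectorMap]
      push_cast
      ring_nf
  calc volume {x : ℂ | ∃ r : ℝ, 0 ≤ r ∧ r ≤ ρ ∧ ∃ t ∈ Set.Icc 0 α,
        x = (r : ℂ) * Complex.exp ((θ + t : ℝ) * Complex.I)}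
      ≤ volume (sectorMap θ '' S) := measure_mono hsub
    _ ≤ ∫⁻ z in S, ENNReal.ofReal |(sectorDeriv θ z).det| :=
        MeasureTheory.addHaar_image_le_lintegral_abs_det_fderiv volume hSm
          (fun z _ => (sectorMap_hasFDerivAt θ z).hasFDerivWithinAt)
    _ = ∫⁻ z in S, ENNReal.ofReal z.re := by
        refine MeasureTheory.setLIntegral_congr_fun hSm ?_
        intro z hz
        have hz1 : 0 ≤ z.re := by
          simp only [hS, Set.mem_preimage, Set.mem_prod, Complex.measurableEquivRealProd_apply,
            Set.mem_Icc] at hz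
          exact hz.1.1
        simp only [sectorDeriv_det]
        exact congrArg ENNReal.ofReal (_root_.abs_of_nonneg hz1)
    _ = ∫⁻ q in Set.Icc 0 ρ ×ˢ Set.Icc 0 α, ENNReal.ofReal q.1 := by
        have h := Complex.volume_preserving_equiv_real_prod.setLIntegral_comp_preimage_emb
          Complex.measurableEquivRealProd.measurableEmbedding (fun q : ℝ × ℝ => ENNReal.ofReal q.1)
          (Set.Icc 0 ρ ×ˢ Set.Icc 0 α)
        exact h
    _ = ENNReal.ofReal (α * ρ ^ 2 / 2) := lintegral_re_rect ρ α hρ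

/-- If a finite collection of wedges covers the plane, then the sum of
their angles is at least 2π; in particular, if all the wedges have angle π/2, there
must be at least four of them. (So three wedges of angle < π/2 cannot cover ℝ².) -/
theorem covering_wedges_angle_sum
    (n : ℕ) (p : Fin n → ℂ) (θ α : Fin n → ℝ) (hα : ∀ i, 0 ≤ α i)
    (hcov : (⋃ i, Wedge (p i) (θ i) (α i)) = Set.univ) :
    2 * π ≤ ∑ i, α i ∧ ((∀ i, α i = π / 2) → 4 ≤ n) := by
  have hπ := Real.pi_pos
  have key : ∀ R : ℝ, 0 ≤ R →
      π * R ^ 2 ≤ ∑ i, α i * (R + ‖p i‖) ^ 2 / 2 := by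
    intro R hR
    set sec : Fin n → Set ℂ := fun i => {x : ℂ | ∃ r : ℝ, 0 ≤ r ∧ r ≤ R + ‖p i‖ ∧
      ∃ t ∈ Set.Icc 0 (α i), x = (r : ℂ) * Complex.exp ((θ i + t : ℝ) * Complex.I)} with hsec
    have hsub : ∀ i, Wedge (p i) (θ i) (α i) ∩ Metric.closedBall 0 R ⊆
        (fun x => p i + x) '' sec i := by
      rintro i x ⟨⟨r, hr0, t, ht, rfl⟩, hxball⟩
      refine ⟨(r : ℂ) * Complex.exp ((θ i + t : ℝ) * Complex.I), ⟨r, hr0, ?_, t, ht, rfl⟩, rfl⟩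
      have habs : ‖((r : ℂ) * Complex.exp ((θ i + t : ℝ) * Complex.I))‖ = r := by
        rw [norm_mul, Complex.norm_exp_ofReal_mul_I, Complex.norm_real, Real.norm_eq_abs, _root_.abs_of_nonneg hr0,
          mul_one]
      have hb : ‖(p i + (r : ℂ) * Complex.exp ((θ i + t : ℝ) * Complex.I))‖ ≤ R := by
        simpa [Complex.dist_eq] using hxball
      calc r = ‖(p i + (r : ℂ) * Complex.exp ((θ i + t : ℝ) * Complex.I)) - p i‖ := by
              rw [add_sub_cancel_left, habs]
        _ ≤ ‖(p i + (r : ℂ) * Complex.exp ((θ i + t : ℝ) * Complex.I))‖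
              + ‖p i‖ := by
              exact norm_sub_le _ _
        _ ≤ R + ‖p i‖ := by gcongr
    have hballsub : Metric.closedBall (0 : ℂ) R ⊆ ⋃ i, (fun x => p i + x) '' sec i := by
      intro x hx
      have : x ∈ ⋃ i, Wedge (p i) (θ i) (α i) := by rw [hcov]; trivial
      obtain ⟨i, hi⟩ := Set.mem_iUnion.1 this
      exact Set.mem_iUnion.2 ⟨i, hsub i ⟨hi, hx⟩⟩
    have hvol : volume (Metric.closedBall (0 : ℂ) R) ≤
        ∑ i, ENNReal.ofReal (α i * (R + ‖p i‖) ^ 2 / 2) := by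
      calc volume (Metric.closedBall (0 : ℂ) R)
          ≤ volume (⋃ i, (fun x => p i + x) '' sec i) := measure_mono hballsub
        _ ≤ ∑ i, volume ((fun x => p i + x) '' sec i) := measure_iUnion_fintype_le _ _
        _ ≤ ∑ i, ENNReal.ofReal (α i * (R + ‖p i‖) ^ 2 / 2) := by
            refine Finset.sum_le_sum (fun i _ => ?_)
            have him : (fun x => p i + x) '' sec i = (fun x => -p i + x) ⁻¹' sec i := by
              ext y
              simp only [Set.mem_image, Set.mem_preimage]
              constructor
              · rintro ⟨x, hx, rfl⟩; simpa using hx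
              · intro hy; exact ⟨-p i + y, hy, by ring⟩
            rw [him, measure_preimage_add]
            exact sector_volume_le (θ i) (α i) (R + ‖p i‖) (hα i)
              (by positivity)
    have hL : volume (Metric.closedBall (0 : ℂ) R) = ENNReal.ofReal (π * R ^ 2) := by
      have hpi : (NNReal.pi : ENNReal) = ENNReal.ofReal π := by
        rw [← NNReal.coe_real_pi, ENNReal.ofReal_coe_nnreal]
      rw [Complex.volume_closedBall, ← ENNReal.ofReal_pow hR, hpi,
        ← ENNReal.ofReal_mul (by positivity), mul_comm]
    rw [hL] at hvol
    have hsum : (∑ i, ENNReal.ofReal (α i * (R + ‖p i‖) ^ 2 / 2)) =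
        ENNReal.ofReal (∑ i, α i * (R + ‖p i‖) ^ 2 / 2) := by
      rw [← ENNReal.ofReal_sum_of_nonneg]
      intro i _
      have := hα i
      positivity
    rw [hsum] at hvol
    refine (ENNReal.ofReal_le_ofReal_iff ?_).1 hvol
    refine Finset.sum_nonneg (fun i _ => ?_)
    have := hα i
    positivity
  -- pass to the limit R → ∞
  have hlim : Tendsto (fun R : ℝ => ∑ i, α i * (1 + ‖p i‖ / R) ^ 2 / 2)
      atTop (nhds (∑ i, α i / 2)) := by
    refine tendsto_finset_sum _ (fun i _ => ?_)
    have h0 : Tendsto (fun R : ℝ => ‖p i‖ / R) atTop (nhds 0) :=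
      tendsto_const_nhds.div_atTop tendsto_id
    have h1 : Tendsto (fun R : ℝ => 1 + ‖p i‖ / R) atTop (nhds 1) := by
      simpa using tendsto_const_nhds.add h0
    have h2 := ((h1.pow 2).const_mul (α i)).div_const 2
    simpa using h2
  have hmain : π ≤ ∑ i, α i / 2 := by
    refine ge_of_tendsto hlim ?_
    filter_upwards [eventually_gt_atTop (0 : ℝ)] with R hR
    have hk := key R hR.le
    have hR2 : (0 : ℝ) < R ^ 2 := by positivity
    have heq : (∑ i, α i * (1 + ‖p i‖ / R) ^ 2 / 2) * R ^ 2 =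
        ∑ i, α i * (R + ‖p i‖) ^ 2 / 2 := by
      rw [Finset.sum_mul]
      refine Finset.sum_congr rfl (fun i _ => ?_)
      field_simp
    have : π * R ^ 2 ≤ (∑ i, α i * (1 + ‖p i‖ / R) ^ 2 / 2) * R ^ 2 := by
      rw [heq]; exact hk
    exact le_of_mul_le_mul_right this hR2
  have hfirst : 2 * π ≤ ∑ i, α i := by
    rw [← Finset.sum_div] at hmain
    linarith
  refine ⟨hfirst, fun h => ?_⟩
  have hsumeq : (∑ i, α i) = n * (π / 2) := by
    rw [Finset.sum_congr rfl (fun i _ => h i), Finset.sum_const, Finset.card_univ,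
      Fintype.card_fin, nsmul_eq_mul]
  rw [hsumeq] at hfirst
  have : (4 : ℝ) ≤ n := by nlinarith
  exact_mod_cast this
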